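/- Let u be a positive locally integrable weight on ℝ and w a nonnegative locally integrable weight on (0, ∞) with W(t) = ∫₀ᵗ w. Define, for t ≥ 1, W̄_u(t) as the supremum of W(u(⋃_j I_j)) / W(u(⋃_j S_j)) over all finite families of pairwise disjoint intervals I_j and finite unions of intervals S_j ⊆ I_j with |I_j| = t|S_j| for every j. Then W̄_u is submultiplicative: W̄_u(λμ) ≤ W̄_u(λ)·W̄_u(μ) for all λ, μ ≥ 1. -/

import Mathlib

open MeasureTheory Function
open scoped ENNReal

/-- A set that is a finite union of (half-open) intervals. -/
def IsFinUnionOfIntervals (S : Set ℝ) : Prop :=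
  ∃ (n : ℕ) (a b : Fin n → ℝ), S = ⋃ i, Set.Ioc (a i) (b i)

/-- `uMeas u E = u(E) = ∫_E u`. -/
noncomputable def uMeas (u : ℝ → ℝ) (E : Set ℝ) : ℝ := ∫ x in E, u x

/-- The set of ratios `W(u(⋃ Iⱼ))/W(u(⋃ Sⱼ))` over admissible configurations:
finitely many pairwise disjoint intervals `Iⱼ`, with `Sⱼ ⊆ Iⱼ` a finite union of
intervals and `|Iⱼ| = t·|Sⱼ|` for every `j`. -/
def configRatios (u W : ℝ → ℝ) (t : ℝ) : Set ℝ≥0∞ :=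
  {q | ∃ (J : ℕ) (I S : Fin J → Set ℝ),
    (∀ j, ∃ aj bj : ℝ, aj ≤ bj ∧ I j = Set.Ioc aj bj) ∧
    Pairwise (onFun Disjoint I) ∧
    (∀ j, S j ⊆ I j) ∧
    (∀ j, IsFinUnionOfIntervals (S j)) ∧
    (∀ j, (volume (I j)).toReal = t * (volume (S j)).toReal) ∧
    q = ENNReal.ofReal (W (uMeas u (⋃ j, I j)) / W (uMeas u (⋃ j, S j)))}

/-- The function `W̄_u`. -/
noncomputable def WbarU (u W : ℝ → ℝ) (t : ℝ) : ℝ≥0∞ := sSup (configRatios u W t)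

lemma IsFinUnionOfIntervals.measurableSet {S : Set ℝ} (h : IsFinUnionOfIntervals S) :
    MeasurableSet S := by
  obtain ⟨n, a, b, rfl⟩ := h
  exact MeasurableSet.iUnion fun i => measurableSet_Ioc

lemma IsFinUnionOfIntervals.inter_Ioc {S : Set ℝ} (h : IsFinUnionOfIntervals S) (x y : ℝ) :
    IsFinUnionOfIntervals (S ∩ Set.Ioc x y) := by
  obtain ⟨n, a, b, rfl⟩ := h
  refine ⟨n, fun i => max (a i) x, fun i => min (b i) y, ?_⟩
  rw [Set.iUnion_inter]
  exact Set.iUnion_congr fun i => Set.Ioc_inter_Ioc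

lemma vol_ne_top_of_subset_Ioc {S : Set ℝ} {x y : ℝ} (h : S ⊆ Set.Ioc x y) :
    volume S ≠ ⊤ :=
  (lt_of_le_of_lt (measure_mono h) measure_Ioc_lt_top).ne

/-- additivity of `vol (S ∩ Ioc a ·)` over a split point. -/
lemma vol_inter_Ioc_add {S : Set ℝ} (hS : MeasurableSet S) {x y z : ℝ}
    (hxy : x ≤ y) (hyz : y ≤ z) :
    volume (S ∩ Set.Ioc x z) = volume (S ∩ Set.Ioc x y) + volume (S ∩ Set.Ioc y z) := by
  rw [← Set.Ioc_union_Ioc_eq_Ioc hxy hyz, Set.inter_union_distrib_left]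
  exact measure_union ((Set.Ioc_disjoint_Ioc.mpr (by simp)).mono Set.inter_subset_right
    Set.inter_subset_right) (hS.inter measurableSet_Ioc)

lemma vol_inter_Ioc_toReal_lipschitz {S : Set ℝ} (hS : MeasurableSet S) (a : ℝ) :
    LipschitzWith 1 (fun x => (volume (S ∩ Set.Ioc a x)).toReal) := by
  have key : ∀ x y : ℝ, x ≤ y →
      (volume (S ∩ Set.Ioc a x)).toReal ≤ (volume (S ∩ Set.Ioc a y)).toReal ∧
      (volume (S ∩ Set.Ioc a y)).toReal ≤ (volume (S ∩ Set.Ioc a x)).toReal + (y - x) := by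
    intro x y hxy
    have hfin : ∀ z : ℝ, volume (S ∩ Set.Ioc a z) ≠ ⊤ := fun z =>
      vol_ne_top_of_subset_Ioc (x := a) (y := z) Set.inter_subset_right
    constructor
    · exact ENNReal.toReal_mono (hfin y)
        (measure_mono (Set.inter_subset_inter_right _ (Set.Ioc_subset_Ioc le_rfl hxy)))
    · have hsub : S ∩ Set.Ioc a y ⊆ (S ∩ Set.Ioc a x) ∪ Set.Ioc x y := by
        rintro z ⟨hz, hz1, hz2⟩
        rcases le_or_gt z x with h | h
        · exact Or.inl ⟨hz, hz1, h⟩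
        · exact Or.inr ⟨h, hz2⟩
      have : volume (S ∩ Set.Ioc a y) ≤ volume (S ∩ Set.Ioc a x) + volume (Set.Ioc x y) :=
        (measure_mono hsub).trans (measure_union_le _ _)
      have h2 : (volume (S ∩ Set.Ioc a y)).toReal ≤
          (volume (S ∩ Set.Ioc a x) + volume (Set.Ioc x y)).toReal :=
        ENNReal.toReal_mono (by
          rw [ENNReal.add_ne_top]
          exact ⟨hfin x, measure_Ioc_lt_top.ne⟩) this
      rwa [ENNReal.toReal_add (hfin x) measure_Ioc_lt_top.ne, Real.volume_Ioc,
        ENNReal.toReal_ofReal (by linarith)] at h2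
  apply LipschitzWith.of_dist_le_mul
  intro x y
  rcases le_total x y with h | h
  · obtain ⟨h1, h2⟩ := key x y h
    rw [Real.dist_eq, Real.dist_eq, abs_sub_le_iff]
    constructor <;> [skip; skip] <;> rw [abs_of_nonpos (by linarith)] <;> push_cast <;> linarith
  · obtain ⟨h1, h2⟩ := key y x h
    rw [Real.dist_eq, Real.dist_eq, abs_sub_le_iff]
    constructor <;> rw [abs_of_nonneg (by linarith)] <;> push_cast <;> linarith

lemma covering_lemma (t : ℝ) (ht : 1 ≤ t) :
    ∀ n : ℕ, ∀ (A B : Fin n → ℝ) (a b : ℝ), a ≤ b →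
    (⋃ i, Set.Ioc (A i) (B i)) ⊆ Set.Ioc a b →
    t * (volume (⋃ i, Set.Ioc (A i) (B i))).toReal ≤ b - a →
    ∃ (N : ℕ) (c d : Fin N → ℝ),
      (∀ k, c k ≤ d k) ∧
      (∀ k, Set.Ioc (c k) (d k) ⊆ Set.Ioc a b) ∧
      Pairwise (onFun Disjoint (fun k => Set.Ioc (c k) (d k))) ∧
      (⋃ i, Set.Ioc (A i) (B i)) ⊆ (⋃ k, Set.Ioc (c k) (d k)) ∧
      (∀ k, d k - c k =
        t * (volume ((⋃ i, Set.Ioc (A i) (B i)) ∩ Set.Ioc (c k) (d k))).toReal) := by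
  have ht0 : (0:ℝ) < t := lt_of_lt_of_le one_pos ht
  intro n
  induction n using Nat.strong_induction_on with
  | _ n IH =>
  obtain _ | n' := n
  · -- base case
    intro A B a b hab hsub hvol
    refine ⟨0, Fin.elim0, Fin.elim0, fun k => k.elim0, fun k => k.elim0, ?_, ?_, fun k => k.elim0⟩
    · intro k; exact k.elim0
    · rw [Set.iUnion_of_empty]; exact Set.empty_subset _
  intro A B a b hab hsub hvol
  by_cases hem : ∃ i, B i ≤ A i
  · -- drop an empty component and recurse
    obtain ⟨i₀, hi₀⟩ := hem
    have hrep : (⋃ i, Set.Ioc (A i) (B i)) =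
        ⋃ k : Fin n', Set.Ioc (A (i₀.succAbove k)) (B (i₀.succAbove k)) := by
      apply Set.Subset.antisymm
      · intro x hx
        obtain ⟨i, hi⟩ := Set.mem_iUnion.mp hx
        rcases eq_or_ne i i₀ with rfl | hne
        · rw [Set.Ioc_eq_empty (not_lt.mpr hi₀)] at hi; exact hi.elim
        · obtain ⟨k, hk⟩ := Fin.exists_succAbove_eq (Ne.symm hne).symm
          exact Set.mem_iUnion.mpr ⟨k, by rw [hk]; exact hi⟩
      · exact Set.iUnion_subset fun k => Set.subset_iUnion
          (fun i => Set.Ioc (A i) (B i)) (i₀.succAbove k)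
    rw [hrep] at hsub hvol ⊢
    exact IH n' (Nat.lt_succ_self n') _ _ a b hab hsub hvol
  -- all components nonempty
  push_neg at hem
  set S := ⋃ i, Set.Ioc (A i) (B i) with hSdef
  have hSmeas : MeasurableSet S := MeasurableSet.iUnion fun i => measurableSet_Ioc
  obtain ⟨i₀, -, hi₀min⟩ := Finset.exists_min_image Finset.univ A Finset.univ_nonempty
  set s₀ := A i₀ with hs₀def
  have hi₀ : Set.Ioc (A i₀) (B i₀) ⊆ Set.Ioc a b :=
    (Set.subset_iUnion (fun i => Set.Ioc (A i) (B i)) i₀).trans hsub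
  obtain ⟨hBb, has₀⟩ := (Set.Ioc_subset_Ioc_iff (hem i₀)).mp hi₀
  have hs₀b : s₀ ≤ b := le_of_lt (lt_of_lt_of_le (hem i₀) hBb)
  have hSs₀ : S ⊆ Set.Ioi s₀ := by
    intro x hx
    obtain ⟨i, hi⟩ := Set.mem_iUnion.mp hx
    exact lt_of_le_of_lt (hi₀min i (Finset.mem_univ i)) hi.1
  have hfin : ∀ T : Set ℝ, T ⊆ S → volume T ≠ ⊤ := fun T hT =>
    vol_ne_top_of_subset_Ioc (hT.trans hsub)
  set φ : ℝ → ℝ := fun x => x - t * (volume (S ∩ Set.Ioc a x)).toReal with hφdef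
  have hφcont : Continuous φ :=
    continuous_id.sub (continuous_const.mul (vol_inter_Ioc_toReal_lipschitz hSmeas a).continuous)
  set C := Set.Icc s₀ b ∩ φ ⁻¹' Set.Iic s₀ with hCdef
  have hCclosed : IsClosed C :=
    isClosed_Icc.inter (isClosed_Iic.preimage hφcont)
  have hs₀C : s₀ ∈ C := by
    constructor
    · exact ⟨le_rfl, hs₀b⟩
    · have : S ∩ Set.Ioc a s₀ = ∅ := by
        apply Set.eq_empty_of_forall_notMem
        rintro x ⟨hxS, -, hx2⟩
        exact absurd (hSs₀ hxS) (not_lt.mpr hx2)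
      simp only [Set.mem_preimage, Set.mem_Iic, hφdef, this, measure_empty,
        ENNReal.toReal_zero, mul_zero, sub_zero, le_refl]
  have hCbdd : BddAbove C := BddAbove.mono Set.inter_subset_left bddAbove_Icc
  set β := sSup C with hβdef
  have hβC : β ∈ C := hCclosed.csSup_mem ⟨s₀, hs₀C⟩ hCbdd
  have hs₀β : s₀ ≤ β := hβC.1.1
  have hβb : β ≤ b := hβC.1.2
  have hφβ_le : φ β ≤ s₀ := hβC.2
  -- B i₀ ≤ β
  have hBi₀β : B i₀ ≤ β := by
    apply le_csSup hCbdd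
    constructor
    · exact ⟨le_of_lt (hem i₀), hBb⟩
    · have hsub2 : Set.Ioc s₀ (B i₀) ⊆ S ∩ Set.Ioc a (B i₀) := by
        intro x hx
        exact ⟨Set.mem_iUnion.mpr ⟨i₀, hx⟩, lt_of_le_of_lt has₀ hx.1, hx.2⟩
      have hv : B i₀ - s₀ ≤ (volume (S ∩ Set.Ioc a (B i₀))).toReal := by
        have := ENNReal.toReal_mono (hfin _ Set.inter_subset_left) (measure_mono hsub2)
        rwa [Real.volume_Ioc, ENNReal.toReal_ofReal (by linarith [hem i₀])] at this
      simp only [Set.mem_preimage, Set.mem_Iic, hφdef]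
      nlinarith [hv, ht, ENNReal.toReal_nonneg (a := volume (S ∩ Set.Ioc a (B i₀)))]
  rcases eq_or_lt_of_le hβb with hβeqb | hβltb
  · -- single final interval (φ b, b]
    have hφb_le : φ b ≤ s₀ := by rwa [hβeqb] at hφβ_le
    have hSb : S ∩ Set.Ioc a b = S := Set.inter_eq_left.mpr hsub
    have hφbval : φ b = b - t * (volume S).toReal := by rw [hφdef]; simp [hSb]
    have hφb_ge_a : a ≤ φ b := by rw [hφbval]; linarith
    have hScover : S ⊆ Set.Ioc (φ b) b := fun x hx =>
      ⟨lt_of_le_of_lt hφb_le (hSs₀ hx), (hsub hx).2⟩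
    refine ⟨1, fun _ => φ b, fun _ => b, fun k => le_trans hφb_le hs₀b,
      fun k => Set.Ioc_subset_Ioc hφb_ge_a le_rfl, Subsingleton.pairwise, ?_, fun k => ?_⟩
    · exact hScover.trans (Set.subset_iUnion (fun _ : Fin 1 => Set.Ioc (φ b) b) 0)
    · rw [Set.inter_eq_left.mpr hScover, hφbval]; ring
  · -- main case: β < b
    have hφβ : φ β = s₀ := by
      refine le_antisymm hφβ_le ?_
      by_contra hlt
      push_neg at hlt
      have hopen : IsOpen {x | φ x < s₀} := isOpen_lt hφcont continuous_const
      obtain ⟨ε, hε, hball⟩ := Metric.isOpen_iff.mp hopen β hlt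
      set x := min b (β + ε / 2) with hxdef
      have hxβ : β < x := lt_min hβltb (by linarith)
      have hxball : x ∈ Metric.ball β ε := by
        rw [Metric.mem_ball, Real.dist_eq, abs_of_pos (by linarith)]
        have : x ≤ β + ε / 2 := min_le_right _ _
        linarith
      have hxC : x ∈ C := by
        refine ⟨⟨le_of_lt (lt_of_le_of_lt hs₀β hxβ), min_le_left _ _⟩, ?_⟩
        simp only [Set.mem_preimage, Set.mem_Iic]
        exact le_of_lt (hball hxball)
      exact absurd (le_csSup hCbdd hxC) (not_le.mpr hxβ)
    -- interval (s₀, β] has the exact ratio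
    have hSab : S ∩ Set.Ioc a β = S ∩ Set.Ioc s₀ β := by
      apply Set.Subset.antisymm
      · rintro x ⟨hxS, -, hx2⟩; exact ⟨hxS, hSs₀ hxS, hx2⟩
      · rintro x ⟨hxS, hx1, hx2⟩; exact ⟨hxS, lt_of_le_of_lt has₀ hx1, hx2⟩
    have hK₁ : β - s₀ = t * (volume (S ∩ Set.Ioc s₀ β)).toReal := by
      have : β - t * (volume (S ∩ Set.Ioc a β)).toReal = s₀ := hφβ
      rw [hSab] at this; linarith
    -- remaining slack
    have hφbgt : s₀ < φ b := by
      by_contra hc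
      push_neg at hc
      have : b ∈ C := ⟨⟨hs₀b, le_rfl⟩, hc⟩
      exact absurd (le_csSup hCbdd this) (not_le.mpr hβltb)
    have hadd : (volume (S ∩ Set.Ioc a b)).toReal =
        (volume (S ∩ Set.Ioc a β)).toReal + (volume (S ∩ Set.Ioc β b)).toReal := by
      rw [vol_inter_Ioc_add hSmeas (le_trans has₀ hs₀β) (le_of_lt hβltb)]
      exact ENNReal.toReal_add (hfin _ Set.inter_subset_left) (hfin _ Set.inter_subset_left)
    have hslack : t * (volume (S ∩ Set.Ioc β b)).toReal ≤ b - β := by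
      have h1 : φ b = b - t * (volume (S ∩ Set.Ioc a b)).toReal := rfl
      have h2 : φ β = β - t * (volume (S ∩ Set.Ioc a β)).toReal := rfl
      nlinarith [hφbgt, hφβ, hadd]
    -- representation of the remainder
    set A' : Fin n' → ℝ := fun k => max (A (i₀.succAbove k)) β with hA'def
    set B' : Fin n' → ℝ := fun k => min (B (i₀.succAbove k)) b with hB'def
    have hrep : S ∩ Set.Ioc β b = ⋃ k, Set.Ioc (A' k) (B' k) := by
      have h1 : S ∩ Set.Ioc β b = ⋃ i, Set.Ioc (max (A i) β) (min (B i) b) := by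
        rw [hSdef, Set.iUnion_inter]
        exact Set.iUnion_congr fun i => Set.Ioc_inter_Ioc
      rw [h1]
      apply Set.Subset.antisymm
      · intro x hx
        obtain ⟨i, hi⟩ := Set.mem_iUnion.mp hx
        rcases eq_or_ne i i₀ with rfl | hne
        · exfalso
          have h3 : x ≤ β := le_trans hi.2 (le_trans (min_le_left _ _) hBi₀β)
          exact absurd (lt_of_le_of_lt (le_max_right _ _) hi.1) (not_lt.mpr h3)
        · obtain ⟨k, hk⟩ := Fin.exists_succAbove_eq (Ne.symm hne).symm
          exact Set.mem_iUnion.mpr ⟨k, by rw [hA'def, hB'def]; simp only; rw [hk]; exact hi⟩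
      · intro x hx
        obtain ⟨k, hk⟩ := Set.mem_iUnion.mp hx
        exact Set.mem_iUnion.mpr ⟨i₀.succAbove k, hk⟩
    have hsub' : (⋃ k, Set.Ioc (A' k) (B' k)) ⊆ Set.Ioc β b := by
      rw [← hrep]; exact Set.inter_subset_right
    have hvol' : t * (volume (⋃ k, Set.Ioc (A' k) (B' k))).toReal ≤ b - β := by
      rw [← hrep]; exact hslack
    obtain ⟨N', c', d', hcd', hsubK', hdisj', hcover', heq'⟩ :=
      IH n' (Nat.lt_succ_self n') A' B' β b (le_of_lt hβltb) hsub' hvol'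
    -- assemble
    refine ⟨N' + 1, Fin.cons s₀ c', Fin.cons β d', ?_, ?_, ?_, ?_, ?_⟩
    · intro k
      refine Fin.cases ?_ (fun k => ?_) k
      · simpa using hs₀β
      · simpa using hcd' k
    · intro k
      refine Fin.cases ?_ (fun k => ?_) k
      · simpa using Set.Ioc_subset_Ioc has₀ hβb
      · simpa using (hsubK' k).trans
          (Set.Ioc_subset_Ioc (le_trans has₀ hs₀β) le_rfl)
    · have key : ∀ k : Fin N', Disjoint (Set.Ioc (s₀ : ℝ) β) (Set.Ioc (c' k) (d' k)) := by
        intro k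
        rw [Set.disjoint_left]
        intro x hx1 hx2
        exact absurd ((hsubK' k) hx2).1 (not_lt.mpr hx1.2)
      intro k k' hkk'
      rcases Fin.eq_zero_or_eq_succ k with rfl | ⟨k1, rfl⟩ <;>
        rcases Fin.eq_zero_or_eq_succ k' with rfl | ⟨k2, rfl⟩
      · exact absurd rfl hkk'
      · simp only [onFun, Fin.cons_zero, Fin.cons_succ]
        exact key k2
      · simp only [onFun, Fin.cons_zero, Fin.cons_succ]
        exact (key k1).symm
      · simp only [onFun, Fin.cons_succ]
        have hne : k1 ≠ k2 := fun h => hkk' (congrArg Fin.succ h)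
        simpa [onFun] using hdisj' hne
    · intro x hx
      rcases le_or_gt x β with hxβ | hxβ
      · exact Set.mem_iUnion.mpr ⟨0, by simpa using ⟨hSs₀ hx, hxβ⟩⟩
      · have hx' : x ∈ ⋃ k, Set.Ioc (A' k) (B' k) := by
          rw [← hrep]; exact ⟨hx, hxβ, (hsub hx).2⟩
        obtain ⟨k, hk⟩ := Set.mem_iUnion.mp (hcover' hx')
        exact Set.mem_iUnion.mpr ⟨k.succ, by simpa using hk⟩
    · intro k
      refine Fin.cases ?_ (fun k => ?_) k
      · simpa using hK₁
      · have h1 := heq' k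
        rw [← hrep] at h1
        have h2 : S ∩ Set.Ioc β b ∩ Set.Ioc (c' k) (d' k) = S ∩ Set.Ioc (c' k) (d' k) := by
          apply Set.Subset.antisymm
          · exact Set.inter_subset_inter_left _ Set.inter_subset_left
          · rintro x ⟨hxS, hxK⟩
            exact ⟨⟨hxS, (hsubK' k) hxK⟩, hxK⟩
        rw [h2] at h1
        simpa using h1

/-- Lemma 3.2: `W̄_u` is submultiplicative on `[1, ∞)`. -/
theorem stmt_10 (u w W : ℝ → ℝ)
    (hu : ∀ x, 0 < u x) (huloc : LocallyIntegrable u)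
    (hw : ∀ t > (0 : ℝ), 0 ≤ w t)
    (hW : ∀ t, W t = ∫ s in Set.Ioc (0 : ℝ) t, w s)
    (hWpos : ∀ t > (0 : ℝ), 0 < W t) :
    ∀ l m : ℝ, 1 ≤ l → 1 ≤ m → WbarU u W (l * m) ≤ WbarU u W l * WbarU u W m := by
  intro l m hl hm
  -- basic facts on W
  have hWint : ∀ y : ℝ, 0 < y → IntegrableOn w (Set.Ioc 0 y) := by
    intro y hy
    by_contra hni
    have h0 : W y = 0 := by rw [hW y]; exact integral_undef hni
    exact absurd (hWpos y hy) (by rw [h0]; exact lt_irrefl 0)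
  have hWmono : ∀ x y : ℝ, 0 ≤ x → x ≤ y → W x ≤ W y := by
    intro x y hx hxy
    rcases eq_or_lt_of_le (hx.trans hxy) with h0y | h0y
    · have hx0 : x = 0 := le_antisymm (hxy.trans h0y.symm.le) hx
      rw [hx0, ← h0y]
    · have hint := hWint y h0y
      have htr : Set.Ioc (0:ℝ) y = Set.Ioc 0 x ∪ Set.Ioc x y :=
        (Set.Ioc_union_Ioc_eq_Ioc hx hxy).symm
      have hnn : 0 ≤ ∫ s in Set.Ioc x y, w s :=
        setIntegral_nonneg measurableSet_Ioc (fun s hs => hw s (lt_of_le_of_lt hx hs.1))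
      rw [hW x, hW y, htr, setIntegral_union (Set.Ioc_disjoint_Ioc.mpr (by simp))
        measurableSet_Ioc (hint.mono_set (Set.Ioc_subset_Ioc le_rfl hxy))
        (hint.mono_set (Set.Ioc_subset_Ioc hx le_rfl))]
      linarith
  have hW0 : W 0 = 0 := by rw [hW]; simp
  have hWnn : ∀ x : ℝ, 0 ≤ x → 0 ≤ W x := fun x hx => hW0 ▸ hWmono 0 x le_rfl hx
  rw [WbarU]
  apply sSup_le
  rintro q ⟨J, I, S, hI, hIdisj, hSsub, hSfin, hvol, rfl⟩
  by_cases hC : W (uMeas u (⋃ j, S j)) = 0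
  · rw [hC, div_zero, ENNReal.ofReal_zero]; exact zero_le
  choose aa bb hab hIeq using hI
  -- covering for each j with parameter m
  have hcov : ∀ j : Fin J, ∃ (N : ℕ) (c d : Fin N → ℝ),
      (∀ k, c k ≤ d k) ∧
      (∀ k, Set.Ioc (c k) (d k) ⊆ I j) ∧
      Pairwise (onFun Disjoint (fun k => Set.Ioc (c k) (d k))) ∧
      S j ⊆ (⋃ k, Set.Ioc (c k) (d k)) ∧
      (∀ k, d k - c k = m * (volume (S j ∩ Set.Ioc (c k) (d k))).toReal) := by
    intro j
    obtain ⟨n, A, B, hSrep⟩ := hSfin j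
    have h1 : (⋃ i, Set.Ioc (A i) (B i)) ⊆ Set.Ioc (aa j) (bb j) := by
      rw [← hSrep, ← hIeq j]; exact hSsub j
    have h2 : m * (volume (⋃ i, Set.Ioc (A i) (B i))).toReal ≤ bb j - aa j := by
      rw [← hSrep]
      have h3 : (volume (I j)).toReal = bb j - aa j := by
        rw [hIeq j, Real.volume_Ioc, ENNReal.toReal_ofReal (sub_nonneg.mpr (hab j))]
      have h4 := hvol j
      have hV := ENNReal.toReal_nonneg (a := volume (S j))
      nlinarith [mul_nonneg (mul_nonneg (sub_nonneg.mpr hl) (le_trans zero_le_one hm)) hV]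
    obtain ⟨N, c, d, hc1, hc2, hc3, hc4, hc5⟩ :=
      covering_lemma m hm n A B (aa j) (bb j) (hab j) h1 h2
    exact ⟨N, c, d, hc1, fun k => (hIeq j) ▸ hc2 k, hc3, hSrep ▸ hc4,
      fun k => by rw [hSrep]; exact hc5 k⟩
  choose N c d hcd hKsub hKdisj hKcover hKeq using hcov
  set T : Fin J → Set ℝ := fun j => ⋃ k, Set.Ioc (c j k) (d j k) with hTdef
  have hSmeas : ∀ j, MeasurableSet (S j) := fun j => (hSfin j).measurableSet
  -- volume computations
  have hvolT : ∀ j, (volume (T j)).toReal = m * (volume (S j)).toReal := by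
    intro j
    have hfin1 : ∀ k : Fin (N j), volume (S j ∩ Set.Ioc (c j k) (d j k)) ≠ ⊤ :=
      fun k => (lt_of_le_of_lt (measure_mono Set.inter_subset_right) measure_Ioc_lt_top).ne
    have h1 : (volume (T j)).toReal = ∑ k : Fin (N j), (d j k - c j k) := by
      rw [hTdef]
      simp only
      rw [measure_iUnion (hKdisj j) (fun k => measurableSet_Ioc), tsum_fintype,
        ENNReal.toReal_sum (fun k _ => by rw [Real.volume_Ioc]; exact ENNReal.ofReal_ne_top)]
      exact Finset.sum_congr rfl fun k _ => by
        rw [Real.volume_Ioc, ENNReal.toReal_ofReal (sub_nonneg.mpr (hcd j k))]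
    have h2 : (volume (S j)).toReal =
        ∑ k : Fin (N j), (volume (S j ∩ Set.Ioc (c j k) (d j k))).toReal := by
      conv_lhs => rw [← Set.inter_eq_left.mpr (hKcover j)]
      rw [Set.inter_iUnion,
        measure_iUnion ((hKdisj j).mono fun k k' h =>
          h.mono Set.inter_subset_right Set.inter_subset_right)
          (fun k => (hSmeas j).inter measurableSet_Ioc),
        tsum_fintype, ENNReal.toReal_sum (fun k _ => hfin1 k)]
    rw [h1, h2, Finset.mul_sum]
    exact Finset.sum_congr rfl fun k _ => hKeq j k
  have hvolI : ∀ j, (volume (I j)).toReal = l * (volume (T j)).toReal := by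
    intro j; rw [hvolT j, hvol j]; ring
  -- first config (parameter l)
  have hmem1 : ENNReal.ofReal (W (uMeas u (⋃ j, I j)) / W (uMeas u (⋃ j, T j)))
      ∈ configRatios u W l :=
    ⟨J, I, T, fun j => ⟨aa j, bb j, hab j, hIeq j⟩, hIdisj,
      fun j => Set.iUnion_subset fun k => hKsub j k,
      fun j => ⟨N j, c j, d j, rfl⟩, hvolI, rfl⟩
  -- second config (parameter m)
  have hsig : ∀ (p p' : Σ j : Fin J, Fin (N j)), p ≠ p' →
      Disjoint (Set.Ioc (c p.1 p.2) (d p.1 p.2)) (Set.Ioc (c p'.1 p'.2) (d p'.1 p'.2)) := by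
    rintro ⟨j, k⟩ ⟨j', k'⟩ hne
    rcases eq_or_ne j j' with rfl | hjj
    · have hkk : k ≠ k' := fun h => hne (by rw [h])
      exact hKdisj j hkk
    · exact (hIdisj hjj).mono (hKsub j k) (hKsub j' k')
  set e := (Fintype.equivFin (Σ j : Fin J, Fin (N j))).symm with hedef
  set K' : Fin (Fintype.card (Σ j : Fin J, Fin (N j))) → Set ℝ :=
    fun i => Set.Ioc (c (e i).1 (e i).2) (d (e i).1 (e i).2) with hK'def
  set σ' : Fin (Fintype.card (Σ j : Fin J, Fin (N j))) → Set ℝ :=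
    fun i => S (e i).1 ∩ K' i with hσ'def
  have hUK : (⋃ i, K' i) = ⋃ j, T j := by
    rw [hK'def]
    rw [e.surjective.iUnion_comp (fun p => Set.Ioc (c p.1 p.2) (d p.1 p.2))]
    rw [Set.iUnion_sigma]
  have hUσ : (⋃ i, σ' i) = ⋃ j, S j := by
    rw [hσ'def, hK'def]
    rw [e.surjective.iUnion_comp (fun p => S p.1 ∩ Set.Ioc (c p.1 p.2) (d p.1 p.2))]
    rw [Set.iUnion_sigma]
    exact Set.iUnion_congr fun j => by
      show (⋃ a, S j ∩ Set.Ioc (c j a) (d j a)) = S j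
      rw [← Set.inter_iUnion]
      exact Set.inter_eq_left.mpr (hKcover j)
  have hmem2 : ENNReal.ofReal (W (uMeas u (⋃ j, T j)) / W (uMeas u (⋃ j, S j)))
      ∈ configRatios u W m := by
    refine ⟨Fintype.card (Σ j : Fin J, Fin (N j)), K', σ',
      fun i => ⟨c (e i).1 (e i).2, d (e i).1 (e i).2, hcd _ _, rfl⟩,
      fun i i' hne => hsig _ _ (fun h => hne (e.injective h)),
      fun i => Set.inter_subset_right,
      fun i => (hSfin _).inter_Ioc _ _, fun i => ?_, ?_⟩
    · rw [hK'def]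
      simp only
      rw [Real.volume_Ioc, ENNReal.toReal_ofReal (sub_nonneg.mpr (hcd _ _))]
      exact hKeq _ _
    · rw [hUK, hUσ]
  -- integrability and monotonicity of uMeas
  have hIntI : IntegrableOn u (⋃ j, I j) := by
    rw [integrableOn_finite_iUnion]
    intro j
    rw [hIeq j]
    exact (huloc.integrableOn_isCompact isCompact_Icc).mono_set Set.Ioc_subset_Icc_self
  have hIntT : IntegrableOn u (⋃ j, T j) :=
    hIntI.mono_set (Set.iUnion_mono fun j => Set.iUnion_subset fun k => hKsub j k)
  have hmS : uMeas u (⋃ j, S j) ≤ uMeas u (⋃ j, T j) :=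
    setIntegral_mono_set hIntT (Filter.Eventually.of_forall fun x => (hu x).le)
      (HasSubset.Subset.eventuallyLE (Set.iUnion_mono fun j => hKcover j))
  have hmT : uMeas u (⋃ j, T j) ≤ uMeas u (⋃ j, I j) :=
    setIntegral_mono_set hIntI (Filter.Eventually.of_forall fun x => (hu x).le)
      (HasSubset.Subset.eventuallyLE
        (Set.iUnion_mono fun j => Set.iUnion_subset fun k => hKsub j k))
  have hS0 : 0 ≤ uMeas u (⋃ j, S j) :=
    setIntegral_nonneg (MeasurableSet.iUnion fun j => hSmeas j) (fun x _ => (hu x).le)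
  -- the W values
  have hCpos : 0 < W (uMeas u (⋃ j, S j)) := lt_of_le_of_ne (hWnn _ hS0) (Ne.symm hC)
  have hBC : W (uMeas u (⋃ j, S j)) ≤ W (uMeas u (⋃ j, T j)) := hWmono _ _ hS0 hmS
  have hAB : W (uMeas u (⋃ j, T j)) ≤ W (uMeas u (⋃ j, I j)) :=
    hWmono _ _ (hS0.trans hmS) hmT
  have hBpos : 0 < W (uMeas u (⋃ j, T j)) := lt_of_lt_of_le hCpos hBC
  have hq : W (uMeas u (⋃ j, I j)) / W (uMeas u (⋃ j, S j)) =
      (W (uMeas u (⋃ j, I j)) / W (uMeas u (⋃ j, T j))) *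
      (W (uMeas u (⋃ j, T j)) / W (uMeas u (⋃ j, S j))) := by
    field_simp
  rw [hq, ENNReal.ofReal_mul (div_nonneg (le_trans (hCpos.le.trans hBC) hAB) hBpos.le)]
  exact mul_le_mul' (le_sSup hmem1) (le_sSup hmem2)
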